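/- Let Γ ⊆ Γ′ be an extension of totally ordered abelian groups, and let Γ_∨ = Γ ∪ {-∞}, Γ′_∨ = Γ′ ∪ {-∞} be the associated idempotent semifields (with max as addition and group addition as multiplication). Then Γ′_∨ is a flat Γ_∨-module: every Γ_∨-linear map v : Γ_∨ⁿ → Γ′_∨ satisfying a relation v∘f = v∘g for f, g : Γ_∨ → Γ_∨ⁿ factors through a finite free Γ_∨-module in which the relation f = g holds. -/

import Mathlib

section helpers
variable {Γ' : Type} [AddCommGroup Γ'] [LinearOrder Γ'] [IsOrderedAddMonoid Γ'] {Γ : AddSubgroup Γ'}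

/-- embedding `WithBot ↥Γ → WithBot Γ'` -/
def emb (Γ : AddSubgroup Γ') (x : WithBot ↥Γ) : WithBot Γ' :=
  x.map (fun x : ↥Γ => (x : Γ'))

lemma emb_fold (x : WithBot ↥Γ) :
    WithBot.map (fun x : ↥Γ => (x : Γ')) x = emb Γ x := rfl

@[simp] lemma emb_bot : emb Γ ⊥ = ⊥ := rfl

@[simp] lemma emb_coe (a : ↥Γ) : emb Γ ↑a = ((a : Γ') : WithBot Γ') := rfl

lemma emb_add (a b : WithBot ↥Γ) : emb Γ (a + b) = emb Γ a + emb Γ b := by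
  induction a using WithBot.recBotCoe with
  | bot => simp
  | coe a =>
    induction b using WithBot.recBotCoe with
    | bot => simp
    | coe b => simp [← WithBot.coe_add]

lemma emb_le_emb {a b : WithBot ↥Γ} : emb Γ a ≤ emb Γ b ↔ a ≤ b := by
  induction a using WithBot.recBotCoe with
  | bot => simp
  | coe a =>
    induction b using WithBot.recBotCoe with
    | bot => simp
    | coe b => simp

lemma emb_mono : Monotone (emb (Γ' := Γ') Γ) := fun _ _ h => emb_le_emb.2 h

lemma emb_max (a b : WithBot ↥Γ) : emb Γ (a ⊔ b) = emb Γ a ⊔ emb Γ b :=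
  emb_mono.map_max

lemma emb_eq_bot {a : WithBot ↥Γ} : emb Γ a = ⊥ ↔ a = ⊥ := by
  induction a using WithBot.recBotCoe with
  | bot => simp
  | coe a => simp

lemma aux1 {x y : WithBot Γ'} {p q : Γ'} (h : x + ↑p ≤ y + ↑q) :
    x + ↑(p - q) ≤ y := by
  induction x using WithBot.recBotCoe with
  | bot => simp
  | coe a =>
    induction y using WithBot.recBotCoe with
    | bot => simp [← WithBot.coe_add] at h
    | coe b =>
      rw [← WithBot.coe_add, ← WithBot.coe_add, WithBot.coe_le_coe] at h
      rw [← WithBot.coe_add, WithBot.coe_le_coe, add_sub]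
      exact sub_le_iff_le_add.2 h

lemma add_max_le {β : Type} [LinearOrder β] [Add β] {a P Q R : β}
    (h1 : a + P ≤ R) (h2 : a + Q ≤ R) : a + (P ⊔ Q) ≤ R := by
  rcases le_total P Q with h | h
  · rwa [sup_eq_right.2 h]
  · rwa [sup_eq_left.2 h]

lemma max_add_le {β : Type} [LinearOrder β] [Add β] {a P Q R : β}
    (h1 : P + a ≤ R) (h2 : Q + a ≤ R) : (P ⊔ Q) + a ≤ R := by
  rcases le_total P Q with h | h
  · rwa [sup_eq_right.2 h]
  · rwa [sup_eq_left.2 h]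

lemma unbot'_spec {β : Type} {x : WithBot β} (d : β) (h : x ≠ ⊥) :
    (↑(x.unbotD d) : WithBot β) = x := by
  induction x using WithBot.recBotCoe with
  | bot => exact absurd rfl h
  | coe a => rfl

end helpers

theorem stmt18 (Γ' : Type) [AddCommGroup Γ'] [LinearOrder Γ'] [IsOrderedAddMonoid Γ'] (Γ : AddSubgroup Γ')
    (n : ℕ) (v : Fin n → WithBot Γ') (f g : Fin n → WithBot ↥Γ)
    (hrel :
      Finset.univ.sup (fun i => v i + (f i).map (fun x : ↥Γ => (x : Γ'))) =
      Finset.univ.sup (fun i => v i + (g i).map (fun x : ↥Γ => (x : Γ')))) :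
    ∃ (m : ℕ) (w : Fin m → Fin n → WithBot ↥Γ) (u : Fin m → WithBot Γ'),
      (∀ i : Fin n,
        Finset.univ.sup (fun j => u j + (w j i).map (fun x : ↥Γ => (x : Γ'))) = v i) ∧
      (∀ j : Fin m,
        Finset.univ.sup (fun i => w j i + f i) =
        Finset.univ.sup (fun i => w j i + g i)) := by
  classical
  simp only [emb_fold] at hrel ⊢
  -- dispose of the case n = 0
  rcases Nat.eq_zero_or_pos n with hn0 | hpos
  · subst hn0
    exact ⟨0, fun j _ => ⊥, fun _ => ⊥, fun i => i.elim0, fun j => j.elim0⟩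
  have hn : (Finset.univ : Finset (Fin n)).Nonempty := ⟨⟨0, hpos⟩, Finset.mem_univ _⟩
  -- the "class entry" function c
  have hc : ∃ c : Fin n → Fin n → WithBot ↥Γ,
      (∀ i k, v i + emb Γ (c i k) ≤ v k) ∧
      (∀ i, v i ≠ ⊥ → v i + emb Γ (c i i) = v i) ∧
      (∀ i k, v i = ⊥ → c i k = ⊥) := by
    refine ⟨fun i k =>
      if h : v i ≠ ⊥ ∧ ∃ γ : ↥Γ, v k = v i + ((γ : Γ') : WithBot Γ')
      then ↑h.2.choose else ⊥, ?_, ?_, ?_⟩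
    · intro i k
      dsimp only
      by_cases h : v i ≠ ⊥ ∧ ∃ γ : ↥Γ, v k = v i + ((γ : Γ') : WithBot Γ')
      · rw [dif_pos h, emb_coe, ← h.2.choose_spec]
      · rw [dif_neg h, emb_bot, WithBot.add_bot]
        exact bot_le
    · intro i hi
      have h : v i ≠ ⊥ ∧ ∃ γ : ↥Γ, v i = v i + ((γ : Γ') : WithBot Γ') :=
        ⟨hi, 0, by simp⟩
      dsimp only
      rw [dif_pos h, emb_coe, ← h.2.choose_spec]
    · intro i k hi
      dsimp only
      rw [dif_neg]
      rintro ⟨h1, -⟩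
      exact h1 hi
  obtain ⟨c, hc1, hc2, hc3⟩ := hc
  -- the maxima of the two sides of the relation along a row of c
  set Af : Fin n → WithBot ↥Γ := fun i => Finset.univ.sup (fun k => c i k + f k) with hAf
  set Ag : Fin n → WithBot ↥Γ := fun i => Finset.univ.sup (fun k => c i k + g k) with hAg
  set S := Finset.univ.sup (fun i => v i + emb Γ (f i)) with hSdef
  -- indices realizing the two suprema
  obtain ⟨is, -, hiS⟩ := Finset.exists_mem_eq_sup Finset.univ hn (fun i => v i + emb Γ (f i))
  obtain ⟨js, -, hjS⟩ := Finset.exists_mem_eq_sup Finset.univ hn (fun i => v i + emb Γ (g i))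
  have hiS' : S = v is + emb Γ (f is) := by rw [hSdef]; exact hiS
  have hjS' : S = v js + emb Γ (g js) := by rw [hrel]; exact hjS
  set φ : ↥Γ := (f is).unbotD 0 with hφdef
  set ψ : ↥Γ := (g js).unbotD 0 with hψdef
  set α : Fin n → ↥Γ := fun i => ((Af i ⊔ Ag i).unbotD 0) with hαdef
  set w : Fin n → Fin n → WithBot ↥Γ := fun i k =>
    if Af i = Ag i then c i k
    else c i k ⊔ ((if k = is then (↑(α i - φ) : WithBot ↥Γ) else ⊥) ⊔
      (if k = js then (↑(α i - ψ) : WithBot ↥Γ) else ⊥)) with hw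
  -- key inequalities
  have key_f : ∀ i k, v i + emb Γ (c i k + f k) ≤ S := by
    intro i k
    rw [emb_add, ← add_assoc, hSdef]
    exact le_trans (add_le_add_left (hc1 i k) _)
      (Finset.le_sup (f := fun i => v i + emb Γ (f i)) (Finset.mem_univ k))
  have key_g : ∀ i k, v i + emb Γ (c i k + g k) ≤ S := by
    intro i k
    rw [emb_add, ← add_assoc, hrel]
    exact le_trans (add_le_add_left (hc1 i k) _)
      (Finset.le_sup (f := fun i => v i + emb Γ (g i)) (Finset.mem_univ k))
  have hAfbot : ∀ i, S = ⊥ → Af i = ⊥ := by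
    intro i hS
    rw [hAf]
    refine le_bot_iff.1 (Finset.sup_le fun k _ => ?_)
    by_cases hvi : v i = ⊥
    · rw [hc3 i k hvi, WithBot.bot_add]
    · have h := key_f i k
      rw [hS, le_bot_iff, WithBot.add_eq_bot] at h
      rcases h with h | h
      · exact absurd h hvi
      · rw [emb_eq_bot.1 h]
  have hAgbot : ∀ i, S = ⊥ → Ag i = ⊥ := by
    intro i hS
    rw [hAg]
    refine le_bot_iff.1 (Finset.sup_le fun k _ => ?_)
    by_cases hvi : v i = ⊥
    · rw [hc3 i k hvi, WithBot.bot_add]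
    · have h := key_g i k
      rw [hS, le_bot_iff, WithBot.add_eq_bot] at h
      rcases h with h | h
      · exact absurd h hvi
      · rw [emb_eq_bot.1 h]
  have hAfle : ∀ i k, c i k + f k ≤ Af i := by
    intro i k; rw [hAf]; exact Finset.le_sup (f := fun k => c i k + f k) (Finset.mem_univ k)
  have hAgle : ∀ i k, c i k + g k ≤ Ag i := by
    intro i k; rw [hAg]; exact Finset.le_sup (f := fun k => c i k + g k) (Finset.mem_univ k)
  have hvA : ∀ i, v i + emb Γ (Af i ⊔ Ag i) ≤ S := by
    intro i
    rcases le_total (Af i) (Ag i) with h | h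
    · rw [sup_eq_right.2 h]
      obtain ⟨k2, -, hk2⟩ := Finset.exists_mem_eq_sup Finset.univ hn (fun k => c i k + g k)
      have : Ag i = c i k2 + g k2 := by rw [hAg]; exact hk2
      rw [this]; exact key_g i k2
    · rw [sup_eq_left.2 h]
      obtain ⟨k2, -, hk2⟩ := Finset.exists_mem_eq_sup Finset.univ hn (fun k => c i k + f k)
      have : Af i = c i k2 + f k2 := by rw [hAf]; exact hk2
      rw [this]; exact key_f i k2
  -- facts available when a row is "unbalanced"
  have hSne : ∀ i, Af i ≠ Ag i → S ≠ ⊥ :=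
    fun i hi hb => hi ((hAfbot i hb).trans (hAgbot i hb).symm)
  have hα : ∀ i, Af i ≠ Ag i → (↑(α i) : WithBot ↥Γ) = Af i ⊔ Ag i := by
    intro i hi
    have hne : Af i ⊔ Ag i ≠ ⊥ := by
      intro hb
      rw [sup_eq_bot_iff] at hb
      exact hi (hb.1.trans hb.2.symm)
    rw [hαdef]
    exact unbot'_spec _ hne
  have hvis : S ≠ ⊥ → v is ≠ ⊥ := by
    intro hS hb; exact hS (by rw [hiS', hb, WithBot.bot_add])
  have hvjs : S ≠ ⊥ → v js ≠ ⊥ := by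
    intro hS hb; exact hS (by rw [hjS', hb, WithBot.bot_add])
  have hφ : S ≠ ⊥ → (↑φ : WithBot ↥Γ) = f is := by
    intro hS
    have hb : f is ≠ ⊥ := by
      intro hb
      exact hS (by rw [hiS', hb, emb_bot, WithBot.add_bot])
    rw [hφdef]; exact unbot'_spec _ hb
  have hψ : S ≠ ⊥ → (↑ψ : WithBot ↥Γ) = g js := by
    intro hS
    have hb : g js ≠ ⊥ := by
      intro hb
      exact hS (by rw [hjS', hb, emb_bot, WithBot.add_bot])
    rw [hψdef]; exact unbot'_spec _ hb
  have hgis : S ≠ ⊥ → g is ≤ (↑φ : WithBot ↥Γ) := by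
    intro hS
    have h1 : v is + emb Γ (g is) ≤ S := by
      rw [hrel]; exact Finset.le_sup (f := fun i => v i + emb Γ (g i)) (Finset.mem_univ is)
    rw [hiS'] at h1
    rw [hφ hS]
    exact emb_le_emb.1 ((WithBot.add_le_add_iff_left (hvis hS)).1 h1)
  have hfjs : S ≠ ⊥ → f js ≤ (↑ψ : WithBot ↥Γ) := by
    intro hS
    have h1 : v js + emb Γ (f js) ≤ S := by
      rw [hSdef]; exact Finset.le_sup (f := fun i => v i + emb Γ (f i)) (Finset.mem_univ js)
    rw [hjS'] at h1
    rw [hψ hS]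
    exact emb_le_emb.1 ((WithBot.add_le_add_iff_left (hvjs hS)).1 h1)
  -- the construction
  refine ⟨n, w, v, ?_, ?_⟩
  · -- reconstruction of v
    intro k
    apply le_antisymm
    · refine Finset.sup_le fun j _ => ?_
      by_cases hj : Af j = Ag j
      · have hwj : w j k = c j k := by rw [hw]; exact if_pos hj
        rw [hwj]; exact hc1 j k
      · have hwj : w j k = c j k ⊔ ((if k = is then (↑(α j - φ) : WithBot ↥Γ) else ⊥) ⊔
            (if k = js then (↑(α j - ψ) : WithBot ↥Γ) else ⊥)) := by
          rw [hw]; exact if_neg hj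
        rw [hwj, emb_max, emb_max]
        refine add_max_le (hc1 j k) (add_max_le ?_ ?_)
        · by_cases hk : k = is
          · subst hk
            rw [if_pos rfl, emb_coe]
            have hsub : ((α j - φ : ↥Γ) : Γ') = (α j : Γ') - (φ : Γ') := by push_cast; ring
            rw [hsub]
            refine aux1 ?_
            have h1 : v j + emb Γ ((↑(α j) : WithBot ↥Γ)) ≤ v k + emb Γ ((↑φ : WithBot ↥Γ)) := by
              rw [hα j hj, hφ (hSne j hj), ← hiS']
              exact hvA j
            rw [emb_coe, emb_coe] at h1
            exact h1
          · rw [if_neg hk, emb_bot, WithBot.add_bot]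
            exact bot_le
        · by_cases hk : k = js
          · subst hk
            rw [if_pos rfl, emb_coe]
            have hsub : ((α j - ψ : ↥Γ) : Γ') = (α j : Γ') - (ψ : Γ') := by push_cast; ring
            rw [hsub]
            refine aux1 ?_
            have h1 : v j + emb Γ ((↑(α j) : WithBot ↥Γ)) ≤ v k + emb Γ ((↑ψ : WithBot ↥Γ)) := by
              rw [hα j hj, hψ (hSne j hj), ← hjS']
              exact hvA j
            rw [emb_coe, emb_coe] at h1
            exact h1
          · rw [if_neg hk, emb_bot, WithBot.add_bot]
            exact bot_le
    · by_cases hk : v k = ⊥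
      · rw [hk]; exact bot_le
      · have hcw : c k k ≤ w k k := by
          rw [hw]
          dsimp only
          split_ifs <;> first | exact le_rfl | exact le_sup_left
        calc v k = v k + emb Γ (c k k) := (hc2 k hk).symm
          _ ≤ v k + emb Γ (w k k) := add_le_add_right (emb_mono hcw) _
          _ ≤ _ := Finset.le_sup (f := fun j => v j + emb Γ (w j k)) (Finset.mem_univ k)
  · -- the rows satisfy the relation
    intro i
    by_cases hj : Af i = Ag i
    · have hwi : ∀ k, w i k = c i k := fun k => by rw [hw]; exact if_pos hj
      simp only [hwi]
      rw [hAf, hAg] at hj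
      exact hj
    · have hwi : ∀ k, w i k = c i k ⊔ ((if k = is then (↑(α i - φ) : WithBot ↥Γ) else ⊥) ⊔
          (if k = js then (↑(α i - ψ) : WithBot ↥Γ) else ⊥)) := fun k => by
        rw [hw]; exact if_neg hj
      have hS := hSne i hj
      have hαle : Af i ⊔ Ag i ≤ (↑(α i) : WithBot ↥Γ) := (hα i hj).ge
      have hF : Finset.univ.sup (fun k => w i k + f k) = (↑(α i) : WithBot ↥Γ) := by
        apply le_antisymm
        · refine Finset.sup_le fun k _ => ?_
          rw [hwi k]
          refine max_add_le (le_trans (hAfle i k) (le_trans le_sup_left hαle)) (max_add_le ?_ ?_)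
          · by_cases hk : k = is
            · subst hk
              rw [if_pos rfl, ← hφ hS, ← WithBot.coe_add, sub_add_cancel]
            · rw [if_neg hk, WithBot.bot_add]
              exact bot_le
          · by_cases hk : k = js
            · subst hk
              refine le_trans (add_le_add_right (hfjs hS) _) ?_
              rw [if_pos rfl, ← WithBot.coe_add, sub_add_cancel]
            · rw [if_neg hk, WithBot.bot_add]
              exact bot_le
        · have h1 : (↑(α i) : WithBot ↥Γ) ≤ w i is + f is := by
            have h2 : (↑(α i - φ) : WithBot ↥Γ) ≤ w i is := by
              rw [hwi is, if_pos rfl]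
              exact le_trans le_sup_left le_sup_right
            calc (↑(α i) : WithBot ↥Γ) = ↑(α i - φ) + f is := by
                  rw [← hφ hS, ← WithBot.coe_add, sub_add_cancel]
              _ ≤ w i is + f is := add_le_add_left h2 _
          exact le_trans h1 (Finset.le_sup (f := fun k => w i k + f k) (Finset.mem_univ is))
      have hG : Finset.univ.sup (fun k => w i k + g k) = (↑(α i) : WithBot ↥Γ) := by
        apply le_antisymm
        · refine Finset.sup_le fun k _ => ?_
          rw [hwi k]
          refine max_add_le (le_trans (hAgle i k) (le_trans le_sup_right hαle)) (max_add_le ?_ ?_)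
          · by_cases hk : k = is
            · subst hk
              refine le_trans (add_le_add_right (hgis hS) _) ?_
              rw [if_pos rfl, ← WithBot.coe_add, sub_add_cancel]
            · rw [if_neg hk, WithBot.bot_add]
              exact bot_le
          · by_cases hk : k = js
            · subst hk
              rw [if_pos rfl, ← hψ hS, ← WithBot.coe_add, sub_add_cancel]
            · rw [if_neg hk, WithBot.bot_add]
              exact bot_le
        · have h1 : (↑(α i) : WithBot ↥Γ) ≤ w i js + g js := by
            have h2 : (↑(α i - ψ) : WithBot ↥Γ) ≤ w i js := by
              rw [hwi js, if_pos rfl]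
              exact le_trans le_sup_right le_sup_right
            calc (↑(α i) : WithBot ↥Γ) = ↑(α i - ψ) + g js := by
                  rw [← hψ hS, ← WithBot.coe_add, sub_add_cancel]
              _ ≤ w i js + g js := add_le_add_left h2 _
          exact le_trans h1 (Finset.le_sup (f := fun k => w i k + g k) (Finset.mem_univ js))
      rw [hF, hG]
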